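/- Let 𝓗 = L² of the circle (e.g. L²(ℝ/ℤ, ℂ) with Haar measure), with orthonormal Hilbert basis (e_n)_{n∈ℤ}, e_n(x) = e^{2πinx}. Let F be the bounded self-adjoint operator on 𝓗 determined by F(e_n) = e_n for n ≥ 0 and F(e_n) = −e_n for n < 0 (so F² = I). For a continuous function f on the circle, let M_f denote the bounded multiplication operator (M_f ξ)(x) = f(x)ξ(x) on 𝓗. Then for every continuous f, the commutator [F, M_f] = F∘M_f − M_f∘F is a compact operator on 𝓗; hence (𝓗, F) is an odd Fredholm module over C(S¹). -/

import Mathlib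

noncomputable section
open MeasureTheory AddCircle
instance : Fact (0 < (1 : ℝ)) := ⟨one_pos⟩

abbrev Hsp := Lp ℂ 2 (haarAddCircle (T := 1))

-- any CLM into ℂ is compact
lemma clm_to_scalar_compact (φ : Hsp →L[ℂ] ℂ) : IsCompactOperator ⇑φ := by
  refine ⟨Metric.closedBall 0 ‖φ‖, isCompact_closedBall _ _, ?_⟩
  filter_upwards [Metric.closedBall_mem_nhds (0 : Hsp) one_pos] with ξ hξ
  rw [Set.mem_preimage, Metric.mem_closedBall, dist_zero_right]
  rw [Metric.mem_closedBall, dist_zero_right] at hξ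
  calc ‖φ ξ‖ ≤ ‖φ‖ * ‖ξ‖ := φ.le_opNorm ξ
    _ ≤ ‖φ‖ * 1 := by gcongr
    _ = ‖φ‖ := mul_one _

lemma rank_one_compact (x y : Hsp) :
    IsCompactOperator ⇑((innerSL ℂ x).smulRight y) := by
  have := (clm_to_scalar_compact (innerSL ℂ x)).clm_comp
    (ContinuousLinearMap.toSpanSingleton ℂ y)
  convert this using 1
  · rfl
  · ext z; simp [ContinuousLinearMap.smulRight_apply]

-- ext on fourier basis
lemma clm_ext_basis {A B : Hsp →L[ℂ] Hsp}
    (h : ∀ n : ℤ, A (fourierBasis n) = B (fourierBasis n)) : A = B := by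
  refine ContinuousLinearMap.ext_on
    (Submodule.dense_iff_topologicalClosure_eq_top.mpr (fourierBasis (T := 1)).dense_span) ?_
  rintro x ⟨n, rfl⟩
  exact h n

lemma clm_ext_basis' {A B : Hsp →L[ℂ] ℂ}
    (h : ∀ n : ℤ, A (fourierBasis n) = B (fourierBasis n)) : A = B := by
  refine ContinuousLinearMap.ext_on
    (Submodule.dense_iff_topologicalClosure_eq_top.mpr (fourierBasis (T := 1)).dense_span) ?_
  rintro x ⟨n, rfl⟩
  exact h n

open scoped InnerProductSpace in
lemma M_fourier_basis
    (M : C(AddCircle (1 : ℝ), ℂ) → (Hsp →L[ℂ] Hsp))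
    (hM : ∀ (f : C(AddCircle (1 : ℝ), ℂ)) (ξ : Hsp),
      (M f ξ : AddCircle (1 : ℝ) → ℂ) =ᵐ[haarAddCircle (T := 1)]
        fun x => f x * ξ x) (k n : ℤ) :
    M (fourier k) (fourierBasis n) = fourierBasis (k + n) := by
  apply Lp.ext
  have h2 : ((fourierBasis (T := 1)) n : AddCircle (1:ℝ) → ℂ)
      =ᵐ[haarAddCircle (T := 1)] fourier n := by
    rw [coe_fourierBasis]; exact coeFn_fourierLp 2 n
  have h3 : ((fourierBasis (T := 1)) (k + n) : AddCircle (1:ℝ) → ℂ)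
      =ᵐ[haarAddCircle (T := 1)] fourier (k + n) := by
    rw [coe_fourierBasis]; exact coeFn_fourierLp 2 (k + n)
  filter_upwards [hM (fourier k) (fourierBasis n), h2, h3] with x h1 h2 h3
  rw [h1, h2, h3, fourier_add]

lemma M_norm_le
    (M : C(AddCircle (1 : ℝ), ℂ) → (Hsp →L[ℂ] Hsp))
    (hM : ∀ (f : C(AddCircle (1 : ℝ), ℂ)) (ξ : Hsp),
      (M f ξ : AddCircle (1 : ℝ) → ℂ) =ᵐ[haarAddCircle (T := 1)]
        fun x => f x * ξ x) (f : C(AddCircle (1 : ℝ), ℂ)) (ξ : Hsp) :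
    ‖M f ξ‖ ≤ ‖f‖ * ‖ξ‖ := by
  rw [Lp.norm_def, Lp.norm_def, eLpNorm_congr_ae (hM f ξ)]
  have hb : ∀ᵐ x ∂(haarAddCircle (T := 1)),
      ‖f x * ξ x‖ ≤ ‖((‖f‖ : ℝ) • (⇑ξ : AddCircle (1:ℝ) → ℂ)) x‖ := by
    filter_upwards with x
    rw [Pi.smul_apply, norm_smul, norm_mul, Real.norm_eq_abs, abs_of_nonneg (norm_nonneg f)]
    gcongr
    exact f.norm_coe_le_norm x
  have hle : eLpNorm (fun x => f x * ξ x) 2 (haarAddCircle (T := 1))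
      ≤ eLpNorm ((‖f‖ : ℝ) • (⇑ξ : AddCircle (1:ℝ) → ℂ)) 2 (haarAddCircle (T := 1)) :=
    eLpNorm_mono_ae hb
  rw [eLpNorm_const_smul] at hle
  refine (ENNReal.toReal_mono ?_ hle).trans ?_
  · exact ENNReal.mul_ne_top ENNReal.coe_ne_top (Lp.eLpNorm_ne_top ξ)
  · simp [ENNReal.toReal_mul, Lp.norm_def]

lemma M_sub
    (M : C(AddCircle (1 : ℝ), ℂ) → (Hsp →L[ℂ] Hsp))
    (hM : ∀ (f : C(AddCircle (1 : ℝ), ℂ)) (ξ : Hsp),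
      (M f ξ : AddCircle (1 : ℝ) → ℂ) =ᵐ[haarAddCircle (T := 1)]
        fun x => f x * ξ x) (f g : C(AddCircle (1 : ℝ), ℂ)) :
    M (f - g) = M f - M g := by
  ext ξ
  have h4 := Lp.coeFn_sub (M f ξ) (M g ξ)
  filter_upwards [hM (f - g) ξ, hM f ξ, hM g ξ, h4] with x h1 h2 h3 h4
  rw [ContinuousLinearMap.sub_apply, h4, Pi.sub_apply, h1, h2, h3,
    ContinuousMap.sub_apply, sub_mul]

lemma M_add
    (M : C(AddCircle (1 : ℝ), ℂ) → (Hsp →L[ℂ] Hsp))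
    (hM : ∀ (f : C(AddCircle (1 : ℝ), ℂ)) (ξ : Hsp),
      (M f ξ : AddCircle (1 : ℝ) → ℂ) =ᵐ[haarAddCircle (T := 1)]
        fun x => f x * ξ x) (f g : C(AddCircle (1 : ℝ), ℂ)) :
    M (f + g) = M f + M g := by
  ext ξ
  have h4 := Lp.coeFn_add (M f ξ) (M g ξ)
  filter_upwards [hM (f + g) ξ, hM f ξ, hM g ξ, h4] with x h1 h2 h3 h4
  rw [ContinuousLinearMap.add_apply, h4, Pi.add_apply, h1, h2, h3,
    ContinuousMap.add_apply, add_mul]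

lemma M_smul
    (M : C(AddCircle (1 : ℝ), ℂ) → (Hsp →L[ℂ] Hsp))
    (hM : ∀ (f : C(AddCircle (1 : ℝ), ℂ)) (ξ : Hsp),
      (M f ξ : AddCircle (1 : ℝ) → ℂ) =ᵐ[haarAddCircle (T := 1)]
        fun x => f x * ξ x) (c : ℂ) (f : C(AddCircle (1 : ℝ), ℂ)) :
    M (c • f) = c • M f := by
  ext ξ
  have h4 := Lp.coeFn_smul c (M f ξ)
  filter_upwards [hM (c • f) ξ, hM f ξ, h4] with x h1 h2 h4
  rw [ContinuousLinearMap.smul_apply, h4, Pi.smul_apply, h1, h2,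
    ContinuousMap.smul_apply, smul_eq_mul, smul_eq_mul, mul_assoc]

lemma M_zero
    (M : C(AddCircle (1 : ℝ), ℂ) → (Hsp →L[ℂ] Hsp))
    (hM : ∀ (f : C(AddCircle (1 : ℝ), ℂ)) (ξ : Hsp),
      (M f ξ : AddCircle (1 : ℝ) → ℂ) =ᵐ[haarAddCircle (T := 1)]
        fun x => f x * ξ x) : M 0 = 0 := by
  ext ξ
  filter_upwards [hM 0 ξ, Lp.coeFn_zero ℂ 2 (haarAddCircle (T := 1))] with x h1 h2
  simpa [h2] using h1

open scoped InnerProductSpace ComplexConjugate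

set_option maxHeartbeats 1000000 in
theorem commutator_sign_operator_multiplication_isCompactOperator
    (F : Lp ℂ 2 (haarAddCircle (T := 1)) →L[ℂ] Lp ℂ 2 (haarAddCircle (T := 1)))
    (hF : ∀ n : ℤ, F (fourierBasis n) =
      if 0 ≤ n then fourierBasis n else -fourierBasis n)
    (M : C(AddCircle (1 : ℝ), ℂ) →
      (Lp ℂ 2 (haarAddCircle (T := 1)) →L[ℂ] Lp ℂ 2 (haarAddCircle (T := 1))))
    (hM : ∀ (f : C(AddCircle (1 : ℝ), ℂ)) (ξ : Lp ℂ 2 (haarAddCircle (T := 1))),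
      (M f ξ : AddCircle (1 : ℝ) → ℂ) =ᵐ[haarAddCircle (T := 1)]
        fun x => f x * ξ x) :
    IsSelfAdjoint F ∧ F ∘L F = 1 ∧
      ∀ f : C(AddCircle (1 : ℝ), ℂ),
        IsCompactOperator (fun ξ : Lp ℂ 2 (haarAddCircle (T := 1)) =>
          F (M f ξ) - M f (F ξ)) := by
  classical
  set ε : ℤ → ℂ := fun n => if 0 ≤ n then (1 : ℂ) else -1 with hε
  have hFs : ∀ n : ℤ, F (fourierBasis n) = ε n • fourierBasis n := by
    intro n; rw [hF n, hε]; by_cases h : 0 ≤ n <;> simp [h]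
  have hortho := orthonormal_iff_ite.mp (fourierBasis (T := 1)).orthonormal
  have hεsq : ∀ n, ε n * ε n = 1 := by
    intro n; by_cases h : 0 ≤ n <;> simp [hε, h]
  have claim1 : ∀ (n : ℤ) (y : Hsp),
      ⟪F (fourierBasis n), y⟫_ℂ = ⟪(fourierBasis (T := 1)) n, F y⟫_ℂ := by
    intro n y
    have key : ε n • innerSL ℂ ((fourierBasis (T := 1)) n)
        = (innerSL ℂ ((fourierBasis (T := 1)) n)).comp F := by
      apply clm_ext_basis'
      intro m
      simp only [ContinuousLinearMap.smul_apply, ContinuousLinearMap.comp_apply,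
        innerSL_apply_apply]
      rw [hFs m, inner_smul_right, smul_eq_mul, hortho n m]
      by_cases h : n = m
      · subst h; simp [mul_comm]
      · simp [h]
    have h1 := ContinuousLinearMap.ext_iff.mp key y
    simp only [ContinuousLinearMap.smul_apply, ContinuousLinearMap.comp_apply,
      innerSL_apply_apply, smul_eq_mul] at h1
    rw [hFs n, inner_smul_left]
    have hc : conj (ε n) = ε n := by by_cases h : 0 ≤ n <;> simp [hε, h]
    rw [hc, h1]
  have hsa : IsSelfAdjoint F := by
    rw [ContinuousLinearMap.isSelfAdjoint_iff_isSymmetric]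
    intro x y
    have key : innerSL ℂ (F x) = (innerSL ℂ x).comp F := by
      apply clm_ext_basis'
      intro m
      simp only [innerSL_apply_apply, ContinuousLinearMap.comp_apply]
      calc ⟪F x, (fourierBasis (T := 1)) m⟫_ℂ
          = conj ⟪(fourierBasis (T := 1)) m, F x⟫_ℂ := (inner_conj_symm _ _).symm
        _ = conj ⟪F ((fourierBasis (T := 1)) m), x⟫_ℂ := by rw [claim1]
        _ = ⟪x, F ((fourierBasis (T := 1)) m)⟫_ℂ := inner_conj_symm _ _
    have h1 := ContinuousLinearMap.ext_iff.mp key y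
    simpa only [innerSL_apply_apply, ContinuousLinearMap.comp_apply,
      ContinuousLinearMap.coe_coe] using h1
  have hFF : F ∘L F = 1 := by
    apply clm_ext_basis
    intro n
    rw [ContinuousLinearMap.comp_apply, hFs n, _root_.map_smul, hFs n, smul_smul, hεsq n,
      one_smul, ContinuousLinearMap.one_apply]
  refine ⟨hsa, hFF, fun f => ?_⟩
  set Φ : C(AddCircle (1 : ℝ), ℂ) → (Hsp →L[ℂ] Hsp) :=
    fun g => F ∘L M g - M g ∘L F with hΦ
  have hΦlip : ∀ g, ‖Φ g‖ ≤ 2 * ‖F‖ * ‖g‖ := by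
    intro g
    refine ContinuousLinearMap.opNorm_le_bound _ (by positivity) fun ξ => ?_
    rw [hΦ]
    simp only [ContinuousLinearMap.sub_apply, ContinuousLinearMap.comp_apply]
    calc ‖F (M g ξ) - M g (F ξ)‖ ≤ ‖F (M g ξ)‖ + ‖M g (F ξ)‖ := norm_sub_le _ _
      _ ≤ ‖F‖ * ‖M g ξ‖ + ‖g‖ * ‖F ξ‖ :=
          add_le_add (F.le_opNorm _) (M_norm_le M hM g (F ξ))
      _ ≤ ‖F‖ * (‖g‖ * ‖ξ‖) + ‖g‖ * (‖F‖ * ‖ξ‖) := by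
          gcongr
          · exact M_norm_le M hM g ξ
          · exact F.le_opNorm ξ
      _ = 2 * ‖F‖ * ‖g‖ * ‖ξ‖ := by ring
  have hΦsub : ∀ g h, Φ g - Φ h = Φ (g - h) := by
    intro g h
    rw [hΦ]
    simp only [M_sub M hM, ContinuousLinearMap.comp_sub, ContinuousLinearMap.sub_comp]
    abel
  have hΦpoly : ∀ p ∈ Submodule.span ℂ (Set.range (@fourier 1)),
      IsCompactOperator ⇑(Φ p) := by
    intro p hp
    induction hp using Submodule.span_induction with
    | mem q hq =>
      obtain ⟨k, rfl⟩ := hq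
      set S : Finset ℤ := Finset.Ico (min 0 (-k)) (max 0 (-k)) with hS
      have hT : Φ (fourier k) = ∑ n ∈ S,
          (innerSL ℂ ((fourierBasis (T := 1)) n)).smulRight
            ((ε (k + n) - ε n) • (fourierBasis (T := 1)) (k + n)) := by
        apply clm_ext_basis
        intro m
        rw [ContinuousLinearMap.sum_apply]
        simp only [ContinuousLinearMap.smulRight_apply, innerSL_apply_apply]
        have hsum : ∀ n ∈ S, ⟪(fourierBasis (T := 1)) n, (fourierBasis (T := 1)) m⟫_ℂ
            • ((ε (k + n) - ε n) • (fourierBasis (T := 1)) (k + n))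
            = if n = m then (ε (k + n) - ε n) • (fourierBasis (T := 1)) (k + n) else 0 := by
          intro n _
          rw [hortho n m]
          by_cases h : n = m <;> simp [h]
        rw [Finset.sum_congr rfl hsum, Finset.sum_ite_eq' S m]
        rw [hΦ]
        simp only [ContinuousLinearMap.sub_apply, ContinuousLinearMap.comp_apply]
        rw [M_fourier_basis M hM k m, hFs m, _root_.map_smul, M_fourier_basis M hM k m,
          hFs (k + m), ← sub_smul]
        by_cases hm : m ∈ S
        · rw [if_pos hm]
        · rw [if_neg hm]
          have hsign : (0 ≤ k + m) ↔ (0 ≤ m) := by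
            rw [hS, Finset.mem_Ico] at hm
            omega
          have hee : ε (k + m) = ε m := by rw [hε]; simp only [hsign]
          rw [hee, sub_self, zero_smul]
      rw [hT]
      have : ∀ s : Finset ℤ, IsCompactOperator
          ⇑(∑ n ∈ s, (innerSL ℂ ((fourierBasis (T := 1)) n)).smulRight
            ((ε (k + n) - ε n) • (fourierBasis (T := 1)) (k + n))) := by
        intro s
        induction s using Finset.induction with
        | empty => simpa using isCompactOperator_zero
        | insert _ _ hn ih =>
          rw [Finset.sum_insert hn, ContinuousLinearMap.coe_add']
          exact (rank_one_compact _ _).add ih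
      exact this S
    | zero =>
      have : Φ 0 = 0 := by rw [hΦ]; simp [M_zero M hM]
      rw [this]
      simpa using isCompactOperator_zero
    | add q r _ _ hq hr =>
      have : Φ (q + r) = Φ q + Φ r := by
        rw [hΦ]
        simp only [M_add M hM, ContinuousLinearMap.comp_add, ContinuousLinearMap.add_comp]
        abel
      rw [this, ContinuousLinearMap.coe_add']
      exact hq.add hr
    | smul c q _ hq =>
      have : Φ (c • q) = c • Φ q := by
        rw [hΦ]
        simp only [M_smul M hM, ContinuousLinearMap.comp_smulₛₗ, ContinuousLinearMap.smul_comp,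
          RingHom.id_apply, smul_sub]
      rw [this, ContinuousLinearMap.coe_smul']
      exact hq.smul c
  have hmem : Φ f ∈ {T : Hsp →L[ℂ] Hsp | IsCompactOperator T} := by
    have hcl : IsClosed {T : Hsp →L[ℂ] Hsp | IsCompactOperator T} :=
      isClosed_setOf_isCompactOperator
    rw [← hcl.closure_eq, Metric.mem_closure_iff]
    intro δ hδ
    have hf : f ∈ closure ((Submodule.span ℂ (Set.range (@fourier 1)) :
        Submodule ℂ C(AddCircle (1 : ℝ), ℂ)) : Set C(AddCircle (1 : ℝ), ℂ)) := by
      rw [← Submodule.topologicalClosure_coe, span_fourier_closure_eq_top]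
      trivial
    rw [Metric.mem_closure_iff] at hf
    obtain ⟨p, hp, hdist⟩ := hf (δ / (2 * ‖F‖ + 1)) (by positivity)
    refine ⟨Φ p, hΦpoly p hp, ?_⟩
    rw [dist_eq_norm, hΦsub f p]
    calc ‖Φ (f - p)‖ ≤ 2 * ‖F‖ * ‖f - p‖ := hΦlip _
      _ ≤ 2 * ‖F‖ * (δ / (2 * ‖F‖ + 1)) := by
          gcongr
          rw [← dist_eq_norm]
          exact hdist.le
      _ < δ := by
          rw [mul_div_assoc', div_lt_iff₀ (by positivity)]
          nlinarith [norm_nonneg F, hδ]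
  have hcoe : ⇑(Φ f) = fun ξ : Hsp => F (M f ξ) - M f (F ξ) := by
    funext ξ
    rw [hΦ]
    simp
  rw [← hcoe]
  exact hmem
end
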